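/- arXiv:1205.0288 — 3 statements merged into one kernel-verified Lean document; each statement's English description precedes it below -/
import Mathlib

section
/- For any real number p with 1 ≤ p ≤ 2, any finite index set I, positive weights ρ_i > 0, and vectors w_i in Hilbert spaces, the squared weighted group p-norm admits the variational representation (Σ_{i∈I} ρ_i^p ‖w_i‖^p)^{2/p} = inf { Σ_{i∈I} ρ_i^2 ‖w_i‖^2 / θ_i : θ ∈ Δ_ν }, where ν = p/(2-p) and Δ_ν = {θ ∈ [0,1]^I : ‖θ‖_ν ≤ 1}, with the conventions 0/0 = 0 and u/0 = ∞ for u > 0. -/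
open scoped ENNReal BigOperators

private lemma holder_step {I : Type*} [Fintype I] {p : ℝ} (hp1 : 1 ≤ p) (hp2 : p < 2)
    (b θ : I → ℝ) (hb : ∀ i, 0 ≤ b i) (hθ0 : ∀ i, 0 ≤ θ i)
    (hθν : ∑ i, θ i ^ (p / (2 - p)) ≤ 1)
    (hzero : ∀ i, θ i = 0 → b i = 0) :
    (∑ i, b i ^ p) ^ (2 / p) ≤ ∑ i, b i ^ 2 / θ i := by
  have hp0 : (0:ℝ) < p := lt_of_lt_of_le one_pos hp1
  have h2p : (0:ℝ) < 2 - p := by linarith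
  set T : ℝ := ∑ i, b i ^ 2 / θ i with hT
  have hT0 : 0 ≤ T := Finset.sum_nonneg fun i _ => div_nonneg (by positivity) (hθ0 i)
  have key : (∑ i, b i ^ p) ≤ T ^ (p / 2) := by
    have h1 : ∀ i : I, b i ^ p = (b i ^ 2 / θ i) ^ (p/2) * (θ i) ^ (p/2) := by
      intro i
      rcases eq_or_lt_of_le (hθ0 i) with h | h
      · rw [hzero i h.symm, ← h]
        simp [Real.zero_rpow (by positivity : p/2 ≠ 0), Real.zero_rpow hp0.ne']
      · rw [← Real.mul_rpow (div_nonneg (by positivity) (hθ0 i)) (hθ0 i),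
          div_mul_cancel₀ _ h.ne', ← Real.rpow_natCast (b i) 2, ← Real.rpow_mul (hb i)]
        norm_num
        rw [show (2:ℝ) * (p / 2) = p by ring]
    have hconj : (2/p).HolderConjugate (2/(2-p)) := by
      rw [Real.holderConjugate_iff]
      constructor
      · exact (one_lt_div hp0).mpr hp2
      · rw [inv_div, inv_div]; linarith
    calc ∑ i, b i ^ p
        = ∑ i, (b i ^ 2 / θ i) ^ (p/2) * (θ i) ^ (p/2) :=
          Finset.sum_congr rfl fun i _ => h1 i
      _ ≤ (∑ i, ((b i ^2 / θ i) ^ (p/2)) ^ (2/p)) ^ (1/(2/p)) *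
          (∑ i, ((θ i) ^ (p/2)) ^ (2/(2-p))) ^ (1/(2/(2-p))) :=
          Real.inner_le_Lp_mul_Lq_of_nonneg _ hconj
            (fun i _ => Real.rpow_nonneg (div_nonneg (by positivity) (hθ0 i)) _)
            (fun i _ => Real.rpow_nonneg (hθ0 i) _)
      _ = T ^ (p/2) * (∑ i, θ i ^ (p/(2-p))) ^ ((2-p)/2) := by
          rw [one_div_div, one_div_div]
          congr 1
          · congr 1
            refine Finset.sum_congr rfl fun i _ => ?_
            rw [← Real.rpow_mul (div_nonneg (by positivity) (hθ0 i))]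
            rw [show p/2 * (2/p) = 1 by field_simp]
            exact Real.rpow_one _
          · congr 1
            refine Finset.sum_congr rfl fun i _ => ?_
            rw [← Real.rpow_mul (hθ0 i)]
            congr 1
            field_simp
      _ ≤ T ^ (p/2) * 1 := by
          refine mul_le_mul_of_nonneg_left ?_ (Real.rpow_nonneg hT0 _)
          exact Real.rpow_le_one (Finset.sum_nonneg fun i _ => Real.rpow_nonneg (hθ0 i) _)
            hθν (by positivity)
      _ = T ^ (p/2) := mul_one _
  calc (∑ i, b i ^ p) ^ (2/p)
      ≤ (T ^ (p/2)) ^ (2/p) :=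
        Real.rpow_le_rpow (Finset.sum_nonneg fun i _ => Real.rpow_nonneg (hb i) _) key
          (by positivity)
    _ = T := by
        rw [← Real.rpow_mul hT0, show p/2 * (2/p) = 1 by field_simp, Real.rpow_one]

/-- Variational representation of the squared weighted group `p`-norm:
`(Σ ρᵢ^p ‖wᵢ‖^p)^(2/p) = inf { Σ ρᵢ² ‖wᵢ‖² / θᵢ : θ ∈ Δ_ν }` with `ν = p/(2-p)`,
conventions `0/0 = 0`, `u/0 = ∞` (realized by `ℝ≥0∞` division), and when `p = 2`
the `ℓ^ν`-constraint is the sup-norm constraint (already implied by `θ ∈ [0,1]^I`). -/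
theorem group_p_norm_variational
    {I : Type*} [Fintype I] {W : I → Type*}
    [∀ i, NormedAddCommGroup (W i)] [∀ i, InnerProductSpace ℝ (W i)]
    (p : ℝ) (hp1 : 1 ≤ p) (hp2 : p ≤ 2)
    (ρ : I → ℝ) (hρ : ∀ i, 0 < ρ i) (w : ∀ i, W i) :
    ENNReal.ofReal ((∑ i, ρ i ^ p * ‖w i‖ ^ p) ^ (2 / p)) =
      ⨅ θ ∈ {θ : I → ℝ | (∀ i, 0 ≤ θ i ∧ θ i ≤ 1) ∧
          (p < 2 → ∑ i, θ i ^ (p / (2 - p)) ≤ 1)},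
        ∑ i, ENNReal.ofReal (ρ i ^ 2 * ‖w i‖ ^ 2) / ENNReal.ofReal (θ i) := by
  have hp0 : (0:ℝ) < p := lt_of_lt_of_le one_pos hp1
  set b : I → ℝ := fun i => ρ i * ‖w i‖ with hbdef
  have hb : ∀ i, 0 ≤ b i := fun i => mul_nonneg (hρ i).le (norm_nonneg _)
  have hrw1 : ∀ i, ρ i ^ p * ‖w i‖ ^ p = b i ^ p := fun i =>
    (Real.mul_rpow (hρ i).le (norm_nonneg _)).symm
  have hrw2 : ∀ i, ρ i ^ 2 * ‖w i‖ ^ 2 = b i ^ 2 := fun i => (mul_pow _ _ 2).symm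
  simp_rw [hrw1, hrw2]
  have h2 : ∀ i : I, b i ^ (2:ℝ) = b i ^ (2:ℕ) := fun i => by
    rw [show ((2:ℝ)) = ((2:ℕ):ℝ) by norm_num, Real.rpow_natCast]
  apply le_antisymm
  · refine le_iInf fun θ => le_iInf fun hθ => ?_
    obtain ⟨hθ01, hθν⟩ := hθ
    rcases eq_or_lt_of_le hp2 with hp | hp
    · subst hp
      rw [show (2:ℝ)/2 = 1 by norm_num, Real.rpow_one]
      simp_rw [h2]
      rw [ENNReal.ofReal_sum_of_nonneg (fun i _ => sq_nonneg (b i))]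
      refine Finset.sum_le_sum fun i _ => ?_
      have h := ENNReal.div_le_div_left (ENNReal.ofReal_le_one.mpr (hθ01 i).2)
        (ENNReal.ofReal (b i ^ 2))
      simpa using h
    · have hν := hθν hp
      by_cases hex : ∃ i, θ i = 0 ∧ b i ≠ 0
      · obtain ⟨i, hi0, hib⟩ := hex
        have hbi : 0 < b i := lt_of_le_of_ne (hb i) (Ne.symm hib)
        have : ∑ i, ENNReal.ofReal (b i ^ 2) / ENNReal.ofReal (θ i) = ⊤ := by
          refine ENNReal.sum_eq_top.mpr ⟨i, Finset.mem_univ i, ?_⟩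
          rw [hi0, ENNReal.ofReal_zero, ENNReal.div_zero]
          simp only [ne_eq, ENNReal.ofReal_eq_zero, not_le]
          positivity
        rw [this]; exact le_top
      · push_neg at hex
        have hzero : ∀ i, θ i = 0 → b i = 0 := fun i h => hex i h
        have hterm : ∀ i, ENNReal.ofReal (b i ^ 2) / ENNReal.ofReal (θ i)
            = ENNReal.ofReal (b i ^ 2 / θ i) := by
          intro i
          rcases eq_or_lt_of_le ((hθ01 i).1) with h | h
          · rw [← h, hzero i h.symm]; simp
          · exact (ENNReal.ofReal_div_of_pos h).symm
        simp_rw [hterm]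
        rw [← ENNReal.ofReal_sum_of_nonneg
          (fun i _ => div_nonneg (by positivity) (hθ01 i).1)]
        exact ENNReal.ofReal_le_ofReal
          (holder_step hp1 hp b θ hb (fun i => (hθ01 i).1) hν hzero)
  · rcases eq_or_lt_of_le hp2 with hp | hp
    · subst hp
      have hmem : (fun _ : I => (1:ℝ)) ∈ {θ : I → ℝ | (∀ i, 0 ≤ θ i ∧ θ i ≤ 1) ∧
          ((2:ℝ) < 2 → ∑ i, θ i ^ ((2:ℝ) / (2 - 2)) ≤ 1)} :=
        ⟨fun i => ⟨zero_le_one, le_refl 1⟩, fun h => absurd h (lt_irrefl 2)⟩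
      refine le_trans (iInf₂_le _ hmem) (le_of_eq ?_)
      rw [show (2:ℝ)/2 = 1 by norm_num, Real.rpow_one]
      simp_rw [h2]
      rw [ENNReal.ofReal_sum_of_nonneg (fun i _ => sq_nonneg (b i))]
      simp
    · have h2p : (0:ℝ) < 2 - p := by linarith
      have hS0 : 0 ≤ ∑ i, b i ^ p :=
        Finset.sum_nonneg fun i _ => Real.rpow_nonneg (hb i) p
      rcases eq_or_lt_of_le hS0 with h0 | h0
      · have hb0 : ∀ i, b i = 0 := by
          intro i
          have := (Finset.sum_eq_zero_iff_of_nonneg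
            (fun i _ => Real.rpow_nonneg (hb i) p)).mp h0.symm i (Finset.mem_univ i)
          exact (Real.rpow_eq_zero (hb i) hp0.ne').mp this
        have hmem : (fun _ : I => (0:ℝ)) ∈ {θ : I → ℝ | (∀ i, 0 ≤ θ i ∧ θ i ≤ 1) ∧
            (p < 2 → ∑ i, θ i ^ (p / (2 - p)) ≤ 1)} :=
          ⟨fun i => ⟨le_refl 0, zero_le_one⟩, fun _ => by
            simp [Real.zero_rpow (ne_of_gt (div_pos hp0 h2p))]⟩
        refine le_trans (iInf₂_le _ hmem) ?_
        simp [hb0, Real.zero_rpow hp0.ne',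
          Real.zero_rpow (show (2:ℝ)/p ≠ 0 by positivity)]
      · set S : ℝ := ∑ i, b i ^ p with hS
        set c : ℝ := S ^ ((2-p)/p) with hc
        have hcpos : 0 < c := Real.rpow_pos_of_pos h0 _
        set θ : I → ℝ := fun i => b i ^ (2-p) / c with hθdef
        have hθmem : θ ∈ {θ : I → ℝ | (∀ i, 0 ≤ θ i ∧ θ i ≤ 1) ∧
            (p < 2 → ∑ i, θ i ^ (p / (2 - p)) ≤ 1)} := by
          constructor
          · intro i
            refine ⟨div_nonneg (Real.rpow_nonneg (hb i) _) hcpos.le, ?_⟩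
            rw [hθdef]
            simp only
            rw [div_le_one hcpos]
            have h1 : b i ^ p ≤ S :=
              Finset.single_le_sum (fun j _ => Real.rpow_nonneg (hb j) p)
                (Finset.mem_univ i)
            calc b i ^ (2-p) = (b i ^ p) ^ ((2-p)/p) := by
                  rw [← Real.rpow_mul (hb i)]
                  congr 1
                  field_simp
              _ ≤ S ^ ((2-p)/p) :=
                Real.rpow_le_rpow (Real.rpow_nonneg (hb i) p) h1 (by positivity)
          · intro _
            have hpt : ∀ i, θ i ^ (p/(2-p)) = b i ^ p / S := by
              intro i
              rw [hθdef]
              simp only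
              rw [Real.div_rpow (Real.rpow_nonneg (hb i) _) hcpos.le,
                ← Real.rpow_mul (hb i), hc, ← Real.rpow_mul h0.le,
                show (2-p) * (p/(2-p)) = p by field_simp,
                show (2-p)/p * (p/(2-p)) = 1 by field_simp, Real.rpow_one]
            rw [Finset.sum_congr rfl fun i _ => hpt i, ← Finset.sum_div, ← hS,
              div_self h0.ne']
        refine le_trans (iInf₂_le θ hθmem) (le_of_eq ?_)
        have hterm : ∀ i, ENNReal.ofReal (b i ^ 2) / ENNReal.ofReal (θ i)
            = ENNReal.ofReal (b i ^ p * c) := by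
          intro i
          rcases eq_or_lt_of_le (hb i) with h | h
          · have hθi : θ i = 0 := by
              rw [hθdef]; simp [← h, Real.zero_rpow h2p.ne']
            rw [← h, hθi]
            simp [Real.zero_rpow hp0.ne']
          · have hθpos : 0 < θ i := div_pos (Real.rpow_pos_of_pos h _) hcpos
            rw [← ENNReal.ofReal_div_of_pos hθpos]
            congr 1
            rw [hθdef]
            simp only
            rw [div_div_eq_mul_div, mul_comm _ c, mul_div_assoc,
              ← Real.rpow_natCast (b i) 2, ← Real.rpow_sub h]
            rw [show ((2:ℕ):ℝ) - (2-p) = p by push_cast; ring]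
            ring
        rw [Finset.sum_congr rfl fun i _ => hterm i,
          ← ENNReal.ofReal_sum_of_nonneg
            (fun i _ => mul_nonneg (Real.rpow_nonneg (hb i) p) hcpos.le),
          ← Finset.sum_mul, ← hS]
        congr 1
        rw [hc, show (2:ℝ)/p = 1 + (2-p)/p by field_simp; ring,
          Real.rpow_add h0, Real.rpow_one]
end

section
/- Let Ψ : A → ℝ be Legendre and α-strongly convex with respect to a norm ‖·‖ for some α > 0, let K be a closed convex set with K ∩ A nonempty, let θ₁ ∈ K ∩ A°, θ ∈ K ∩ A, g ∈ ℝ^d, and set θ₂ = argmin_{θ' ∈ K ∩ A} { ⟨g, θ'⟩ + D_Ψ(θ', θ₁) }. Then ⟨g, θ₁ - θ⟩ ≤ D_Ψ(θ, θ₁) - D_Ψ(θ, θ₂) + ‖g‖_*² / (2α), where ‖·‖_* is the dual norm. -/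
def WithNorm {E : Type*} (_N : E → ℝ) : Type _ := E

lemma norm_le_of_norm_like {E : Type*} [NormedAddCommGroup E] [NormedSpace ℝ E]
    [FiniteDimensional ℝ E] (N : E → ℝ)
    (htri : ∀ x y, N (x + y) ≤ N x + N y)
    (hhom : ∀ (c : ℝ) x, N (c • x) = |c| * N x)
    (hdef : ∀ x, N x = 0 → x = 0) :
    ∃ C > 0, ∀ x : E, ‖x‖ ≤ C * N x := by
  have h0 : N 0 = 0 := by simpa using hhom 0 0
  letI : AddCommGroup (WithNorm N) := inferInstanceAs (AddCommGroup E)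
  letI : Module ℝ (WithNorm N) := inferInstanceAs (Module ℝ E)
  letI : NormedAddCommGroup (WithNorm N) :=
    AddGroupNorm.toNormedAddCommGroup
      { toFun := N
        map_zero' := h0
        add_le' := htri
        neg' := fun x => by have h := hhom (-1) (show E from x); rw [neg_one_smul, abs_neg, abs_one, one_mul] at h; exact h
        eq_zero_of_map_eq_zero' := fun x hx => hdef x hx }
  letI : NormedSpace ℝ (WithNorm N) :=
    ⟨fun c x => le_of_eq (by rw [Real.norm_eq_abs]; exact hhom c x)⟩
  letI : FiniteDimensional ℝ (WithNorm N) := inferInstanceAs (FiniteDimensional ℝ E)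
  let f : WithNorm N →ₗ[ℝ] E := LinearMap.id (R := ℝ) (M := E)
  have hcont : Continuous f := f.continuous_of_finiteDimensional
  obtain ⟨C, hC, hle⟩ := SemilinearMapClass.bound_of_continuous f hcont
  exact ⟨C, hC, fun x => hle x⟩

open Topology Filter Set in
/-- Per-step mirror descent lemma (Lemma 2.1 of Nemirovski et al.): with `Ψ`
Legendre and `α`-strongly convex w.r.t. a norm `N` (dual norm `Ndual`), `K` closed
convex meeting `A`, `θ₁ ∈ K ∩ A°`, `θ ∈ K ∩ A`, `g ∈ ℝ^d`, and
`θ₂ = argmin_{θ' ∈ K ∩ A} { ⟨g, θ'⟩ + D_Ψ(θ', θ₁) }`, one has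
`⟨g, θ₁ - θ⟩ ≤ D_Ψ(θ, θ₁) - D_Ψ(θ, θ₂) + Ndual(g)² / (2α)`. -/
theorem mirror_descent_step_lemma
    {d : ℕ} (A K : Set (EuclideanSpace ℝ (Fin d)))
    (hK : Convex ℝ K) (hKc : IsClosed K) (hKA : (K ∩ A).Nonempty)
    (Ψ : EuclideanSpace ℝ (Fin d) → ℝ)
    (Ψ' : EuclideanSpace ℝ (Fin d) → EuclideanSpace ℝ (Fin d))
    (hdiff : ∀ x ∈ interior A, HasGradientAt Ψ (Ψ' x) x)
    (N : EuclideanSpace ℝ (Fin d) → ℝ)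
    (hNtri : ∀ x y, N (x + y) ≤ N x + N y)
    (hNhom : ∀ (c : ℝ) x, N (c • x) = |c| * N x)
    (hNdef : ∀ x, N x = 0 → x = 0)
    (Ndual : EuclideanSpace ℝ (Fin d) → ℝ)
    (hNdual : ∀ g, Ndual g = sSup {r : ℝ | ∃ y, N y ≤ 1 ∧ r = (inner ℝ g y : ℝ)})
    (α : ℝ) (hα : 0 < α)
    (hstrong : ∀ θ ∈ interior A, ∀ θ' ∈ A,
      (inner ℝ (Ψ' θ) (θ' - θ) : ℝ) + α / 2 * (N (θ' - θ)) ^ 2 ≤ Ψ θ' - Ψ θ)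
    (D : EuclideanSpace ℝ (Fin d) → EuclideanSpace ℝ (Fin d) → ℝ)
    (hD : ∀ a b, D a b = Ψ a - Ψ b - (inner ℝ (Ψ' b) (a - b) : ℝ))
    (θ₁ θ θ₂ g : EuclideanSpace ℝ (Fin d))
    (hθ₁ : θ₁ ∈ K ∩ interior A) (hθ : θ ∈ K ∩ A)
    (hθ₂mem : θ₂ ∈ K ∩ A) (hθ₂int : θ₂ ∈ interior A)
    (hθ₂min : ∀ θ' ∈ K ∩ A,
      (inner ℝ g θ₂ : ℝ) + D θ₂ θ₁ ≤ (inner ℝ g θ' : ℝ) + D θ' θ₁) :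
    (inner ℝ g (θ₁ - θ) : ℝ) ≤ D θ θ₁ - D θ θ₂ + (Ndual g) ^ 2 / (2 * α) := by
  have hN0 : N 0 = 0 := by simpa using hNhom 0 0
  have hNneg : ∀ x : EuclideanSpace ℝ (Fin d), N (-x) = N x := fun x => by simpa using hNhom (-1) x
  have hNnonneg : ∀ x : EuclideanSpace ℝ (Fin d), 0 ≤ N x := by
    intro x
    have h := hNtri x (-x)
    simp [hN0, hNneg] at h
    linarith
  obtain ⟨C, hC, hCle⟩ := norm_le_of_norm_like N hNtri hNhom hNdef
  -- dual norm bound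
  have hSbdd : BddAbove {r : ℝ | ∃ y, N y ≤ 1 ∧ r = (inner ℝ g y : ℝ)} := by
    refine ⟨‖g‖ * C, ?_⟩
    rintro r ⟨y, hy, rfl⟩
    have h1 : (inner ℝ g y : ℝ) ≤ ‖g‖ * ‖y‖ := real_inner_le_norm g y
    have h2 : ‖y‖ ≤ C * N y := hCle y
    nlinarith [norm_nonneg g, hNnonneg y, norm_nonneg y,
      mul_le_mul_of_nonneg_left h2 (norm_nonneg g),
      mul_le_mul_of_nonneg_left hy (mul_nonneg (norm_nonneg g) (le_of_lt hC))]
  have hdual : ∀ w : EuclideanSpace ℝ (Fin d), (inner ℝ g w : ℝ) ≤ Ndual g * N w := by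
    intro w
    rcases eq_or_ne (N w) 0 with h | h
    · have hw0 : w = 0 := hNdef w h
      have hge : 0 ≤ Ndual g := by
        rw [hNdual]
        refine le_csSup hSbdd ⟨0, by simp [hN0]⟩
      simp [hw0, h]
      positivity
    · have hpos : 0 < N w := lt_of_le_of_ne (hNnonneg w) (Ne.symm h)
      set y := (N w)⁻¹ • w with hy
      have hNy : N y = 1 := by
        rw [hy, hNhom, abs_of_pos (by positivity)]
        field_simp
      have hmem : (inner ℝ g y : ℝ) ∈ {r : ℝ | ∃ y, N y ≤ 1 ∧ r = (inner ℝ g y : ℝ)} :=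
        ⟨y, le_of_eq hNy, rfl⟩
      have hle : (inner ℝ g y : ℝ) ≤ Ndual g := by
        rw [hNdual]; exact le_csSup hSbdd hmem
      have hiy : (inner ℝ g y : ℝ) = (N w)⁻¹ * (inner ℝ g w : ℝ) := by
        rw [hy, real_inner_smul_right]
      have : (inner ℝ g w : ℝ) = N w * (inner ℝ g y : ℝ) := by
        rw [hiy]; field_simp
      rw [this, mul_comm]
      exact mul_le_mul_of_nonneg_right hle (le_of_lt hpos)
  -- strong convexity bound
  have hD21 : α / 2 * (N (θ₂ - θ₁)) ^ 2 ≤ D θ₂ θ₁ := by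
    have := hstrong θ₁ hθ₁.2 θ₂ hθ₂mem.2
    rw [hD]
    linarith
  -- variational inequality
  set v : EuclideanSpace ℝ (Fin d) := θ - θ₂ with hv
  have hVI : (0 : ℝ) ≤ (inner ℝ g v : ℝ) + (inner ℝ (Ψ' θ₂) v : ℝ) - (inner ℝ (Ψ' θ₁) v : ℝ) := by
    set F : EuclideanSpace ℝ (Fin d) → ℝ := fun x => (inner ℝ g x : ℝ) + Ψ x - (inner ℝ (Ψ' θ₁) x : ℝ) with hF
    have hFmin : ∀ θ' ∈ K ∩ A, F θ₂ ≤ F θ' := by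
      intro θ' hθ'
      have h := hθ₂min θ' hθ'
      rw [hD, hD, inner_sub_right, inner_sub_right] at h
      simp only [hF]
      linarith
    -- derivative of F along the segment towards θ
    have hg1 : HasFDerivAt (fun x : EuclideanSpace ℝ (Fin d) => (inner ℝ g x : ℝ)) (innerSL ℝ g) θ₂ :=
      (innerSL ℝ g).hasFDerivAt
    have hg3 : HasFDerivAt (fun x : EuclideanSpace ℝ (Fin d) => (inner ℝ (Ψ' θ₁) x : ℝ)) (innerSL ℝ (Ψ' θ₁)) θ₂ :=
      (innerSL ℝ (Ψ' θ₁)).hasFDerivAt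
    have hg2 : HasFDerivAt Ψ (InnerProductSpace.toDual ℝ (EuclideanSpace ℝ (Fin d)) (Ψ' θ₂) : EuclideanSpace ℝ (Fin d) →L[ℝ] ℝ) θ₂ :=
      (hasGradientAt_iff_hasFDerivAt.mp (hdiff θ₂ hθ₂int))
    have hFd : HasFDerivAt F
        (innerSL ℝ g + (InnerProductSpace.toDual ℝ (EuclideanSpace ℝ (Fin d)) (Ψ' θ₂) : EuclideanSpace ℝ (Fin d) →L[ℝ] ℝ) - innerSL ℝ (Ψ' θ₁))
        θ₂ := (hg1.add hg2).sub hg3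
    set c : ℝ → EuclideanSpace ℝ (Fin d) := fun t => θ₂ + t • v with hc
    have hc0 : c 0 = θ₂ := by simp [hc]
    have hcd : HasDerivAt c v 0 := by
      have h1 : HasDerivAt (fun t : ℝ => t • v) ((1 : ℝ) • v) 0 :=
        (hasDerivAt_id 0).smul_const v
      simpa [hc, one_smul] using h1.const_add θ₂
    have hφ : HasDerivAt (fun t => F (c t))
        ((inner ℝ g v : ℝ) + (inner ℝ (Ψ' θ₂) v : ℝ) - (inner ℝ (Ψ' θ₁) v : ℝ)) 0 := by
      have hFd' : HasFDerivAt F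
          (innerSL ℝ g + (InnerProductSpace.toDual ℝ (EuclideanSpace ℝ (Fin d)) (Ψ' θ₂) :
            EuclideanSpace ℝ (Fin d) →L[ℝ] ℝ) - innerSL ℝ (Ψ' θ₁)) (c 0) := by
        rw [hc0]; exact hFd
      have := hFd'.comp_hasDerivAt 0 hcd
      simp [Function.comp, InnerProductSpace.toDual_apply_apply] at this; exact this
    -- eventual membership in K ∩ A along the segment
    have hev : ∀ᶠ t in 𝓝[>] (0:ℝ), c t ∈ K ∩ A := by
      have hopen : ∀ᶠ t in 𝓝 (0:ℝ), c t ∈ interior A := by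
        have : ContinuousAt c 0 := hcd.continuousAt
        have := this.preimage_mem_nhds (isOpen_interior.mem_nhds (hc0 ▸ hθ₂int))
        filter_upwards [this] with t ht using ht
      have h01 : ∀ᶠ t in 𝓝[>] (0:ℝ), t ∈ Set.Ioo (0:ℝ) 1 :=
        Ioo_mem_nhdsGT_of_mem (by norm_num : (0:ℝ) ∈ Set.Ico (0:ℝ) 1)
      filter_upwards [hopen.filter_mono nhdsWithin_le_nhds, h01] with t hA' ht
      refine ⟨?_, interior_subset hA'⟩
      have heq : c t = (1 - t) • θ₂ + t • θ := by
        simp only [hc, hv, smul_sub, sub_smul, one_smul]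
        abel
      rw [heq]
      exact hK hθ₂mem.1 hθ.1 (by linarith [ht.1, ht.2]) (le_of_lt ht.1) (by ring)
    -- slope is eventually nonneg on the right
    have hslope : ∀ᶠ t in 𝓝[>] (0:ℝ), 0 ≤ slope (fun t => F (c t)) 0 t := by
      filter_upwards [hev, self_mem_nhdsWithin] with t hmem (ht : 0 < t)
      have h1 : F θ₂ ≤ F (c t) := hFmin _ hmem
      have heq : slope (fun t => F (c t)) 0 t = (F (c t) - F θ₂) / t := by
        simp only [slope_def_field, hc0, sub_zero]
      rw [heq]
      exact div_nonneg (by linarith) (le_of_lt ht)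
    have htend : Filter.Tendsto (slope (fun t => F (c t)) 0) (𝓝[>] (0:ℝ))
        (𝓝 ((inner ℝ g v : ℝ) + (inner ℝ (Ψ' θ₂) v : ℝ) - (inner ℝ (Ψ' θ₁) v : ℝ))) :=
      (hasDerivAt_iff_tendsto_slope.mp hφ).mono_left
        (nhdsWithin_mono 0 fun x hx => ne_of_gt hx)
    exact ge_of_tendsto htend hslope
  -- assemble
  have key1 : (inner ℝ g (θ₂ - θ) : ℝ) ≤ D θ θ₁ - D θ θ₂ - D θ₂ θ₁ := by
    have hswap : (inner ℝ g (θ₂ - θ) : ℝ) = -(inner ℝ g v : ℝ) := by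
      rw [hv, ← inner_neg_right, neg_sub]
    have split : ∀ w : EuclideanSpace ℝ (Fin d), (inner ℝ w (θ - θ₁) : ℝ) =
        (inner ℝ w (θ - θ₂) : ℝ) + (inner ℝ w (θ₂ - θ₁) : ℝ) := by
      intro w
      rw [← inner_add_right]
      congr 1
      abel
    rw [hD, hD, hD, hswap]
    have h1 := split (Ψ' θ₁)
    rw [h1]
    rw [hv] at hVI
    linarith
  have key2 : (inner ℝ g (θ₁ - θ₂) : ℝ) ≤ Ndual g * N (θ₁ - θ₂) := hdual _
  have key4 : N (θ₁ - θ₂) = N (θ₂ - θ₁) := by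
    rw [← hNneg (θ₁ - θ₂), neg_sub]
  have key3 : Ndual g * N (θ₁ - θ₂) ≤ (Ndual g) ^ 2 / (2 * α) + α / 2 * (N (θ₁ - θ₂)) ^ 2 := by
    have h := sq_nonneg (Ndual g - α * N (θ₁ - θ₂))
    have h2α : (0:ℝ) < 2 * α := by linarith
    set q : ℝ := (Ndual g) ^ 2 / (2 * α) with hqdef
    have hq : q * (2 * α) = (Ndual g) ^ 2 := by
      rw [hqdef]; field_simp
    have h3 : 0 ≤ (q + α / 2 * (N (θ₁ - θ₂)) ^ 2 - Ndual g * N (θ₁ - θ₂)) * (2 * α) := by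
      nlinarith [h, hq]
    by_contra hcon
    push_neg at hcon
    have h5 : q + α / 2 * (N (θ₁ - θ₂)) ^ 2 - Ndual g * N (θ₁ - θ₂) < 0 := by linarith
    nlinarith [mul_neg_of_neg_of_pos h5 h2α]
  have hsum : (inner ℝ g (θ₁ - θ) : ℝ) = (inner ℝ g (θ₁ - θ₂) : ℝ) + (inner ℝ g (θ₂ - θ) : ℝ) := by
    rw [← inner_add_right]
    congr 1
    abel
  rw [hsum]
  rw [key4] at key3 key2
  linarith [key1, key2, key3, hD21]
end

section
/- Mirror descent regret bound: under the assumptions of the strong-convexity lemma (Ψ Legendre and α-strongly convex on A with respect to ‖·‖, K closed convex with K∩A ≠ ∅), if the iterates satisfy θ^{(k)} = argmin_{θ ∈ K∩A}{ η⟨ĝ_k, θ⟩ + D_Ψ(θ, θ^{(k-1)}) } for a constant step size η > 0, then for any θ* ∈ K∩A: Σ_{k=1}^T ⟨ĝ_k, θ^{(k-1)} - θ*⟩ ≤ D_Ψ(θ*, θ^{(0)})/η + (η/(2α)) Σ_{k=1}^T ‖ĝ_k‖_*². -/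
open scoped Topology


section Helpers

variable {d : ℕ}

lemma mdb_N_sum {ι : Type*} (N : EuclideanSpace ℝ (Fin d) → ℝ)
    (hN0 : N 0 = 0)
    (hNtri : ∀ x y, N (x + y) ≤ N x + N y)
    (s : Finset ι) (f : ι → EuclideanSpace ℝ (Fin d)) :
    N (∑ i ∈ s, f i) ≤ ∑ i ∈ s, N (f i) := by
  classical
  induction s using Finset.cons_induction with
  | empty => simp [hN0]
  | cons a s ha ih =>
    rw [Finset.sum_cons, Finset.sum_cons]
    exact (hNtri _ _).trans (by linarith)

lemma mdb_dual_pair (N : EuclideanSpace ℝ (Fin d) → ℝ)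
    (hNtri : ∀ x y, N (x + y) ≤ N x + N y)
    (hNhom : ∀ (c : ℝ) x, N (c • x) = |c| * N x)
    (hNdef : ∀ x, N x = 0 → x = 0)
    (Ndual : EuclideanSpace ℝ (Fin d) → ℝ)
    (hNdual : ∀ g, Ndual g = sSup {r : ℝ | ∃ y, N y ≤ 1 ∧ r = (inner ℝ g y : ℝ)})
    (g v : EuclideanSpace ℝ (Fin d)) :
    (inner ℝ g v : ℝ) ≤ Ndual g * N v := by
  have hN0 : N 0 = 0 := by simpa using hNhom 0 0
  have hNneg : ∀ x, N (-x) = N x := by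
    intro x; simpa using hNhom (-1) x
  have hNnn : ∀ x, 0 ≤ N x := by
    intro x
    have h := hNtri x (-x)
    rw [add_neg_cancel, hN0, hNneg] at h
    linarith
  rcases eq_or_ne v 0 with rfl | hv
  · simp [hN0]
  have hNv : 0 < N v := lt_of_le_of_ne (hNnn v) (fun h => hv (hNdef v h.symm))
  -- upper bound : N z ≤ C * ‖z‖
  set b := EuclideanSpace.basisFun (Fin d) ℝ with hb
  set C : ℝ := ∑ i, N (b i) with hC
  have hCnn : 0 ≤ C := Finset.sum_nonneg fun i _ => hNnn _
  have hupper : ∀ z, N z ≤ C * ‖z‖ := by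
    intro z
    have hz : z = ∑ i, (z i) • b i := by
      have := b.sum_repr z
      simpa [hb] using this.symm
    calc N z = N (∑ i, (z i) • b i) := by rw [← hz]
      _ ≤ ∑ i, N ((z i) • b i) := mdb_N_sum N hN0 hNtri _ _
      _ = ∑ i, |z i| * N (b i) := by simp [hNhom]
      _ ≤ ∑ i, ‖z‖ * N (b i) := by
          apply Finset.sum_le_sum
          intro i _
          have h1 : |z i| ≤ ‖z‖ := by
            have h2 : |(inner ℝ (b i) z : ℝ)| ≤ ‖b i‖ * ‖z‖ := abs_real_inner_le_norm _ _
            have h3 : (inner ℝ (b i) z : ℝ) = z i := by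
              simp [hb, EuclideanSpace.basisFun_apply, EuclideanSpace.inner_single_left]
            have h4 : ‖b i‖ = 1 := b.orthonormal.1 i
            rw [h3, h4, one_mul] at h2
            exact h2
          exact mul_le_mul_of_nonneg_right h1 (hNnn _)
      _ = C * ‖z‖ := by rw [Finset.sum_mul]; congr 1; ext i; ring
  -- lower bound via compact sphere
  have hlip : LipschitzWith (Real.toNNReal C) N := by
    apply LipschitzWith.of_dist_le_mul
    intro x y
    have h1 : N x - N y ≤ N (x - y) := by
      have := hNtri (x - y) y; simpa using this
    have h2 : N y - N x ≤ N (x - y) := by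
      have := hNtri (y - x) x
      have h3 : N (y - x) = N (x - y) := by rw [← hNneg (x - y)]; congr 1; abel
      simp at this; linarith
    have h4 : dist (N x) (N y) ≤ N (x - y) := by
      rw [Real.dist_eq, abs_le]; constructor <;> linarith
    refine h4.trans ?_
    have := hupper (x - y)
    rw [Real.coe_toNNReal _ hCnn]
    simpa [dist_eq_norm] using this
  have hcont : Continuous N := hlip.continuous
  have hsne : (Metric.sphere (0 : EuclideanSpace ℝ (Fin d)) 1).Nonempty := by
    refine ⟨‖v‖⁻¹ • v, ?_⟩
    simp [norm_smul, abs_of_nonneg (inv_nonneg.2 (norm_nonneg v)),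
      inv_mul_cancel₀ (norm_ne_zero_iff.2 hv)]
  obtain ⟨u, hu, humin⟩ := (isCompact_sphere (0 : EuclideanSpace ℝ (Fin d)) 1).exists_isMinOn
    hsne hcont.continuousOn
  have hu1 : ‖u‖ = 1 := by simpa using hu
  have hc : 0 < N u := by
    have hune : u ≠ 0 := by intro h; rw [h] at hu1; simp at hu1
    exact lt_of_le_of_ne (hNnn u) (fun h => hune (hNdef u h.symm))
  have hlower : ∀ z, N u * ‖z‖ ≤ N z := by
    intro z
    rcases eq_or_ne z 0 with rfl | hz
    · simp [hN0]
    have hzpos : (0:ℝ) < ‖z‖ := norm_pos_iff.2 hz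
    have hmem : ‖z‖⁻¹ • z ∈ Metric.sphere (0 : EuclideanSpace ℝ (Fin d)) 1 := by
      simp [norm_smul, abs_of_nonneg (inv_nonneg.2 (norm_nonneg z)),
        inv_mul_cancel₀ (norm_ne_zero_iff.2 hz)]
    have h6 : N u ≤ N (‖z‖⁻¹ • z) := humin hmem
    have heq : N (‖z‖⁻¹ • z) = ‖z‖⁻¹ * N z := by
      rw [hNhom, abs_of_nonneg (inv_nonneg.2 (norm_nonneg z))]
    rw [heq] at h6
    have h7 := mul_le_mul_of_nonneg_right h6 (le_of_lt hzpos)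
    calc N u * ‖z‖ ≤ ‖z‖⁻¹ * N z * ‖z‖ := h7
      _ = N z := by field_simp
  -- the set is bounded above
  have hbdd : BddAbove {r : ℝ | ∃ y, N y ≤ 1 ∧ r = (inner ℝ g y : ℝ)} := by
    refine ⟨‖g‖ * (N u)⁻¹, ?_⟩
    rintro r ⟨y, hy, rfl⟩
    have h1 : (inner ℝ g y : ℝ) ≤ ‖g‖ * ‖y‖ := real_inner_le_norm g y
    have h2 : ‖y‖ ≤ (N u)⁻¹ := by
      have h5 := hlower y
      have h6 := mul_le_mul_of_nonneg_left (h5.trans hy) (le_of_lt (inv_pos.2 hc))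
      rw [← mul_assoc, inv_mul_cancel₀ (ne_of_gt hc), one_mul, mul_one] at h6
      exact h6
    calc (inner ℝ g y : ℝ) ≤ ‖g‖ * ‖y‖ := h1
      _ ≤ ‖g‖ * (N u)⁻¹ := mul_le_mul_of_nonneg_left h2 (norm_nonneg g)
  -- element of the set
  have hmem : (inner ℝ g ((N v)⁻¹ • v) : ℝ) ∈ {r : ℝ | ∃ y, N y ≤ 1 ∧ r = (inner ℝ g y : ℝ)} := by
    refine ⟨(N v)⁻¹ • v, ?_, rfl⟩
    rw [hNhom, abs_of_nonneg (inv_nonneg.2 (le_of_lt hNv)), inv_mul_cancel₀ (ne_of_gt hNv)]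
  have hle := le_csSup hbdd hmem
  rw [← hNdual] at hle
  have : (inner ℝ g ((N v)⁻¹ • v) : ℝ) = (N v)⁻¹ * (inner ℝ g v : ℝ) := by
    rw [real_inner_smul_right]
  rw [this] at hle
  have := mul_le_mul_of_nonneg_right hle (le_of_lt hNv)
  calc (inner ℝ g v : ℝ) = (N v)⁻¹ * (inner ℝ g v : ℝ) * N v := by field_simp
    _ ≤ Ndual g * N v := this

end Helpers

lemma mdb_opt {d : ℕ} {A K : Set (EuclideanSpace ℝ (Fin d))}
    (hK : Convex ℝ K)
    {Ψ : EuclideanSpace ℝ (Fin d) → ℝ}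
    {Ψ' : EuclideanSpace ℝ (Fin d) → EuclideanSpace ℝ (Fin d)}
    {D : EuclideanSpace ℝ (Fin d) → EuclideanSpace ℝ (Fin d) → ℝ}
    (hD : ∀ a b, D a b = Ψ a - Ψ b - (inner ℝ (Ψ' b) (a - b) : ℝ))
    {η : ℝ} {b c a g : EuclideanSpace ℝ (Fin d)}
    (hb_int : b ∈ interior A) (hbK : b ∈ K) (haK : a ∈ K) (haA : a ∈ A)
    (hdiffb : HasGradientAt Ψ (Ψ' b) b)
    (hmin : ∀ θ' ∈ K ∩ A, η * (inner ℝ g b : ℝ) + D b c ≤ η * (inner ℝ g θ' : ℝ) + D θ' c) :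
    0 ≤ η * (inner ℝ g (a - b) : ℝ) + (inner ℝ (Ψ' b - Ψ' c) (a - b) : ℝ) := by
  set u := a - b with hu
  set f : ℝ → ℝ := fun t => η * (inner ℝ g (b + t • u) : ℝ) + D (b + t • u) c with hf
  set L : ℝ := η * (inner ℝ g u : ℝ) +
    ((inner ℝ (Ψ' b) u : ℝ) - (inner ℝ (Ψ' c) u : ℝ)) with hL
  -- derivative of f at 0 is L
  have hline : HasDerivAt (fun t : ℝ => b + t • u) u 0 := by
    simpa using ((hasDerivAt_id (0:ℝ)).smul_const u).const_add b
  have hF : HasFDerivAt Ψ (InnerProductSpace.toDual ℝ _ (Ψ' b)) (b + (0:ℝ) • u) := by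
    simpa using hdiffb.hasFDerivAt
  have hΨd : HasDerivAt (fun t : ℝ => Ψ (b + t • u)) (inner ℝ (Ψ' b) u : ℝ) 0 := by
    have := hF.comp_hasDerivAt 0 hline
    simp only [InnerProductSpace.toDual_apply_apply] at this
    exact this
  have h1 : HasDerivAt (fun t : ℝ => η * (inner ℝ g (b + t • u) : ℝ))
      (η * (inner ℝ g u : ℝ)) 0 := by
    have e : (fun t : ℝ => η * (inner ℝ g (b + t • u) : ℝ)) =
        fun t : ℝ => η * (inner ℝ g b : ℝ) + t * (η * (inner ℝ g u : ℝ)) := by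
      funext t; rw [inner_add_right, real_inner_smul_right]; ring
    rw [e]; exact (hasDerivAt_mul_const _).const_add _
  have h2 : HasDerivAt (fun t : ℝ => D (b + t • u) c)
      ((inner ℝ (Ψ' b) u : ℝ) - (inner ℝ (Ψ' c) u : ℝ)) 0 := by
    have e : (fun t : ℝ => D (b + t • u) c) =
        fun t : ℝ => Ψ (b + t • u) -
          (Ψ c + ((inner ℝ (Ψ' c) (b - c) : ℝ) + t * (inner ℝ (Ψ' c) u : ℝ))) := by
      funext t
      have hx : b + t • u - c = (b - c) + t • u := by abel
      rw [hD, hx, inner_add_right, real_inner_smul_right]; ring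
    rw [e]
    exact hΨd.sub (((hasDerivAt_mul_const _).const_add _).const_add _)
  have hfd : HasDerivAt f L 0 := h1.add h2
  -- slope tends to L along 𝓝[>] 0
  have hslope : Filter.Tendsto (slope f 0) (𝓝[>] (0:ℝ)) (𝓝 L) :=
    (hasDerivAt_iff_tendsto_slope.1 hfd).mono_left
      (nhdsWithin_mono 0 (fun x hx => ne_of_gt hx))
  -- slopes are eventually nonneg
  have hev : ∀ᶠ t in 𝓝[>] (0:ℝ), 0 ≤ slope f 0 t := by
    have hA : ∀ᶠ t in 𝓝[>] (0:ℝ), b + t • u ∈ interior A := by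
      have hopen : IsOpen {t : ℝ | b + t • u ∈ interior A} :=
        isOpen_interior.preimage
          (continuous_const.add ((continuous_id.smul continuous_const)))
      have h0 : (0:ℝ) ∈ {t : ℝ | b + t • u ∈ interior A} := by simpa using hb_int
      exact mem_nhdsWithin_of_mem_nhds (hopen.mem_nhds h0)
    have hIoc : ∀ᶠ t in 𝓝[>] (0:ℝ), t ∈ Set.Ioc (0:ℝ) 1 :=
      Ioc_mem_nhdsGT_of_mem ⟨le_refl 0, one_pos⟩
    filter_upwards [hA, hIoc] with t htA htI
    have htK : b + t • u ∈ K := by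
      have hcvx := hK hbK haK (by linarith [htI.2] : (0:ℝ) ≤ 1 - t) (le_of_lt htI.1)
        (by ring : (1 - t) + t = 1)
      have : (1 - t) • b + t • a = b + t • u := by
        rw [hu]; module
      rwa [this] at hcvx
    have hle := hmin (b + t • u) ⟨htK, interior_subset htA⟩
    have hf0 : f 0 = η * (inner ℝ g b : ℝ) + D b c := by simp [hf]
    have hft : f 0 ≤ f t := by rw [hf0]; exact hle
    rw [slope_def_field, sub_zero]
    exact div_nonneg (by linarith) (le_of_lt htI.1)
  have hL0 : 0 ≤ L := ge_of_tendsto hslope hev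
  rw [hL] at hL0
  rw [inner_sub_left]
  linarith



open scoped BigOperators

/-- Mirror descent regret bound: with `Ψ` Legendre and `α`-strongly convex w.r.t. a
norm `N` (dual norm `Ndual`), `K` closed convex meeting `A`, if the iterates satisfy
`θ^{(k)} = argmin_{θ ∈ K ∩ A} { η ⟨ĝ_k, θ⟩ + D_Ψ(θ, θ^{(k-1)}) }` for a constant step
size `η > 0`, then for any `θ* ∈ K ∩ A`:
`Σ_{k=1}^T ⟨ĝ_k, θ^{(k-1)} - θ*⟩ ≤ D_Ψ(θ*, θ^{(0)})/η + (η/(2α)) Σ_{k=1}^T Ndual(ĝ_k)²`. -/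
theorem mirror_descent_regret_bound
    {d : ℕ} (A K : Set (EuclideanSpace ℝ (Fin d)))
    (hK : Convex ℝ K) (hKc : IsClosed K) (hKA : (K ∩ A).Nonempty)
    (Ψ : EuclideanSpace ℝ (Fin d) → ℝ)
    (Ψ' : EuclideanSpace ℝ (Fin d) → EuclideanSpace ℝ (Fin d))
    (hdiff : ∀ x ∈ interior A, HasGradientAt Ψ (Ψ' x) x)
    (N : EuclideanSpace ℝ (Fin d) → ℝ)
    (hNtri : ∀ x y, N (x + y) ≤ N x + N y)
    (hNhom : ∀ (c : ℝ) x, N (c • x) = |c| * N x)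
    (hNdef : ∀ x, N x = 0 → x = 0)
    (Ndual : EuclideanSpace ℝ (Fin d) → ℝ)
    (hNdual : ∀ g, Ndual g = sSup {r : ℝ | ∃ y, N y ≤ 1 ∧ r = (inner ℝ g y : ℝ)})
    (α : ℝ) (hα : 0 < α)
    (hstrong : ∀ θ ∈ interior A, ∀ θ' ∈ A,
      (inner ℝ (Ψ' θ) (θ' - θ) : ℝ) + α / 2 * (N (θ' - θ)) ^ 2 ≤ Ψ θ' - Ψ θ)
    (D : EuclideanSpace ℝ (Fin d) → EuclideanSpace ℝ (Fin d) → ℝ)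
    (hD : ∀ a b, D a b = Ψ a - Ψ b - (inner ℝ (Ψ' b) (a - b) : ℝ))
    (T : ℕ) (η : ℝ) (hη : 0 < η)
    (θ : ℕ → EuclideanSpace ℝ (Fin d))
    (gest : ℕ → EuclideanSpace ℝ (Fin d))
    (hmem : ∀ k ≤ T, θ k ∈ K ∩ A) (hint : ∀ k ≤ T, θ k ∈ interior A)
    (hiter : ∀ k, 1 ≤ k → k ≤ T → ∀ θ' ∈ K ∩ A,
      η * (inner ℝ (gest k) (θ k) : ℝ) + D (θ k) (θ (k - 1)) ≤
        η * (inner ℝ (gest k) θ' : ℝ) + D θ' (θ (k - 1)))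
    (θstar : EuclideanSpace ℝ (Fin d)) (hθstar : θstar ∈ K ∩ A) :
    ∑ k ∈ Finset.range T, (inner ℝ (gest (k + 1)) (θ k - θstar) : ℝ) ≤
      D θstar (θ 0) / η +
        η / (2 * α) * ∑ k ∈ Finset.range T, (Ndual (gest (k + 1))) ^ 2 := by
  -- abbreviations
  have hNneg : ∀ x, N (-x) = N x := by intro x; simpa using hNhom (-1) x
  have hDnn : ∀ x ∈ interior A, ∀ y ∈ A, 0 ≤ D y x := by
    intro x hx y hy
    have h := hstrong x hx y hy
    rw [hD]
    nlinarith [sq_nonneg (N (y - x)), hα]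
  have key : ∀ k < T, η * (inner ℝ (gest (k + 1)) (θ k - θstar) : ℝ) ≤
      (D θstar (θ k) - D θstar (θ (k + 1))) + η ^ 2 / (2 * α) * (Ndual (gest (k + 1))) ^ 2 := by
    intro k hk
    set b := θ (k + 1) with hb
    set c := θ k with hc
    set g := gest (k + 1) with hg
    have hb_int : b ∈ interior A := hint (k + 1) (by omega)
    have hbA : b ∈ A := (hmem (k + 1) (by omega)).2
    have hc_int : c ∈ interior A := hint k (by omega)
    have hmin : ∀ θ' ∈ K ∩ A, η * (inner ℝ g b : ℝ) + D b c ≤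
        η * (inner ℝ g θ' : ℝ) + D θ' c := by
      intro θ' hθ'
      have := hiter (k + 1) (by omega) (by omega) θ' hθ'
      simpa [hb, hc, hg] using this
    have hopt := mdb_opt hK hD (η := η) (g := g) (c := c) hb_int
      (hmem (k + 1) (by omega)).1 hθstar.1 hθstar.2
      (hdiff b hb_int) hmin
    -- three-point identity
    have h3pt : (inner ℝ (Ψ' b - Ψ' c) (θstar - b) : ℝ) =
        D θstar c - D θstar b - D b c := by
      simp only [hD, inner_sub_left, inner_sub_right]
      ring
    rw [h3pt] at hopt
    -- strong convexity lower bound on D b c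
    have hsc : α / 2 * (N (b - c)) ^ 2 ≤ D b c := by
      have := hstrong c hc_int b hbA
      rw [hD]; linarith
    -- dual pairing bound
    have hdual := mdb_dual_pair N hNtri hNhom hNdef Ndual hNdual g (c - b)
    have hNcb : N (c - b) = N (b - c) := by
      rw [← hNneg (b - c)]; congr 1; abel
    -- split the inner product
    have hsplit : (inner ℝ g (c - θstar) : ℝ) =
        (inner ℝ g (c - b) : ℝ) + (inner ℝ g (b - θstar) : ℝ) := by
      rw [← inner_add_right]; congr 1; abel
    have hopt' : η * (inner ℝ g (b - θstar) : ℝ) ≤ D θstar c - D θstar b - D b c := by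
      have : (inner ℝ g (θstar - b) : ℝ) = -(inner ℝ g (b - θstar) : ℝ) := by
        rw [← inner_neg_right]; congr 1; abel
      rw [this] at hopt; linarith
    have hyoung : η * (Ndual g * N (c - b)) ≤
        η ^ 2 / (2 * α) * (Ndual g) ^ 2 + α / 2 * (N (c - b)) ^ 2 := by
      rw [← sub_nonneg]
      have heq : η ^ 2 / (2 * α) * (Ndual g) ^ 2 + α / 2 * (N (c - b)) ^ 2 -
          η * (Ndual g * N (c - b)) = (η * Ndual g - α * N (c - b)) ^ 2 / (2 * α) := by
        field_simp; ring
      rw [heq]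
      positivity
    have hgcb : η * (inner ℝ g (c - b) : ℝ) ≤ η * (Ndual g * N (c - b)) :=
      mul_le_mul_of_nonneg_left hdual (le_of_lt hη)
    have : η * (inner ℝ g (c - θstar) : ℝ) ≤
        D θstar c - D θstar b + η ^ 2 / (2 * α) * (Ndual g) ^ 2 := by
      rw [hsplit, mul_add]
      nlinarith [hNcb ▸ hsc]
    simpa [hb, hc, hg] using this
  -- sum up
  set S := ∑ k ∈ Finset.range T, (Ndual (gest (k + 1))) ^ 2 with hS
  have hSnn : 0 ≤ S := Finset.sum_nonneg fun i _ => sq_nonneg _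
  have hsum : η * ∑ k ∈ Finset.range T, (inner ℝ (gest (k + 1)) (θ k - θstar) : ℝ) ≤
      D θstar (θ 0) + η ^ 2 / (2 * α) * S := by
    rw [Finset.mul_sum]
    calc ∑ k ∈ Finset.range T, η * (inner ℝ (gest (k + 1)) (θ k - θstar) : ℝ)
        ≤ ∑ k ∈ Finset.range T, ((D θstar (θ k) - D θstar (θ (k + 1))) +
            η ^ 2 / (2 * α) * (Ndual (gest (k + 1))) ^ 2) := by
          refine Finset.sum_le_sum fun k hks => key k (Finset.mem_range.1 hks)
      _ = (D θstar (θ 0) - D θstar (θ T)) + η ^ 2 / (2 * α) * S := by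
          rw [Finset.sum_add_distrib, Finset.sum_range_sub' (fun k => D θstar (θ k)),
            hS, Finset.mul_sum]
      _ ≤ D θstar (θ 0) + η ^ 2 / (2 * α) * S := by
          have := hDnn (θ T) (hint T le_rfl) θstar hθstar.2
          linarith
  have hαne : (α : ℝ) ≠ 0 := ne_of_gt hα
  have hηne : (η : ℝ) ≠ 0 := ne_of_gt hη
  calc ∑ k ∈ Finset.range T, (inner ℝ (gest (k + 1)) (θ k - θstar) : ℝ)
      = (η * ∑ k ∈ Finset.range T, (inner ℝ (gest (k + 1)) (θ k - θstar) : ℝ)) / η := by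
        field_simp
    _ ≤ (D θstar (θ 0) + η ^ 2 / (2 * α) * S) / η := by
        gcongr
    _ = D θstar (θ 0) / η + η / (2 * α) * S := by
        field_simp
end
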